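/- Let f ∈ 𝕋[x_1,…,x_n] have support S ⊆ ℕ^n and coefficients α_𝐢. For 𝐢 ∈ S, the monomial α_𝐢 x^𝐢 is essential for f if and only if there exist c ∈ ℝ^n and d ∈ ℝ such that ⟨c, 𝐢⟩ + d = π(α_𝐢) and ⟨c, 𝐣⟩ + d > π(α_𝐣) for every 𝐣 ∈ S with 𝐣 ≠ 𝐢; equivalently, iff the point (𝐢, π(α_𝐢)) ∈ ℝ^{n+1} is a vertex of the upper convex hull of the finite point set {(𝐣, π(α_𝐣)) : 𝐣 ∈ S}. (One-to-one correspondence between essential monomials of f and vertices of its essential complex.) -/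

import Mathlib

/-- The extended tropical semiring `𝕋`: tangible reals `(a, false)`,
ghost reals `(a, true)`, and `none` = `-∞`. -/
def T : Type := Option (ℝ × Bool)

namespace T

/-- The tangible element of value `a`. -/
def tang (a : ℝ) : T := some (a, false)

/-- The ghost element `a^ν` of value `a`. -/
def ghost (a : ℝ) : T := some (a, true)

/-- Tropical addition on `𝕋`. -/
noncomputable def add : T → T → T
  | none, y => y
  | some p, none => some p
  | some (a, s), some (b, t) =>
      if a < b then some (b, t) else if b < a then some (a, s) else some (a, true)

/-- Tropical multiplication on `𝕋`. -/
noncomputable def mul : T → T → T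
  | none, _ => none
  | some _, none => none
  | some (a, s), some (b, t) => some (a + b, s || t)

lemma add_assoc' : ∀ x y z : T, add (add x y) z = add x (add y z) := by
  rintro (_ | ⟨a, s⟩) (_ | ⟨b, t⟩) (_ | ⟨c, u⟩) <;>
    show @Eq (Option (ℝ × Bool)) _ _ <;>
    simp only [add] <;>
    (try by_cases h1 : a < b) <;> (try by_cases h2 : b < a) <;>
    (try by_cases h3 : b < c) <;> (try by_cases h4 : c < b) <;>
    (try by_cases h5 : a < c) <;> (try by_cases h6 : c < a) <;>
    simp only [*, ↓reduceIte] <;>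
    first
      | rfl
      | (exfalso; linarith)
      | (refine congrArg some ?_; refine Prod.ext ?_ ?_ <;>
          first | rfl | linarith | simp)

lemma add_comm' : ∀ x y : T, add x y = add y x := by
  rintro (_ | ⟨a, s⟩) (_ | ⟨b, t⟩) <;>
    show @Eq (Option (ℝ × Bool)) _ _ <;>
    simp only [add] <;>
    (try by_cases h1 : a < b) <;> (try by_cases h2 : b < a) <;>
    simp only [*, ↓reduceIte] <;>
    first
      | rfl
      | (exfalso; linarith)
      | (refine congrArg some ?_; refine Prod.ext ?_ ?_ <;>
          first | rfl | linarith | simp)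

lemma mul_assoc' : ∀ x y z : T, mul (mul x y) z = mul x (mul y z) := by
  rintro (_ | ⟨a, s⟩) (_ | ⟨b, t⟩) (_ | ⟨c, u⟩) <;>
    show @Eq (Option (ℝ × Bool)) _ _ <;>
    simp [mul, add_assoc, Bool.or_assoc]

lemma mul_comm' : ∀ x y : T, mul x y = mul y x := by
  rintro (_ | ⟨a, s⟩) (_ | ⟨b, t⟩) <;> show @Eq (Option (ℝ × Bool)) _ _ <;>
    simp [mul, add_comm, Bool.or_comm]

lemma left_distrib' : ∀ x y z : T, mul x (add y z) = add (mul x y) (mul x z) := by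
  rintro (_ | ⟨a, s⟩) (_ | ⟨b, t⟩) (_ | ⟨c, u⟩) <;>
    show @Eq (Option (ℝ × Bool)) _ _ <;>
    simp only [add, mul] <;>
    (try by_cases h3 : b < c) <;> (try by_cases h4 : c < b) <;>
    simp only [*, ↓reduceIte, add_lt_add_iff_left] <;>
    first
      | rfl
      | (exfalso; linarith)
      | (refine congrArg some ?_; refine Prod.ext ?_ ?_ <;>
          first | rfl | linarith | simp)

noncomputable instance : Zero T := ⟨none⟩
noncomputable instance : One T := ⟨some (0, false)⟩
noncomputable instance : Add T := ⟨add⟩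
noncomputable instance : Mul T := ⟨mul⟩

noncomputable instance : CommSemiring T where
  add := (· + ·)
  zero := 0
  add_assoc := add_assoc'
  zero_add := fun x => by cases x <;> rfl
  add_zero := fun x => by cases x <;> rfl
  add_comm := add_comm'
  mul := (· * ·)
  one := 1
  mul_assoc := mul_assoc'
  one_mul := fun x => by
    show mul (some (0, false)) x = x
    rcases x with _ | ⟨a, s⟩ <;> show @Eq (Option (ℝ × Bool)) _ _ <;> simp [mul]
  mul_one := fun x => by
    show mul x (some (0, false)) = x
    rcases x with _ | ⟨a, s⟩ <;> show @Eq (Option (ℝ × Bool)) _ _ <;> simp [mul]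
  mul_comm := mul_comm'
  zero_mul := fun x => by cases x <;> rfl
  mul_zero := fun x => by cases x <;> rfl
  left_distrib := left_distrib'
  right_distrib := fun x y z => by
    show mul (add x y) z = add (mul x z) (mul y z)
    rw [mul_comm', left_distrib', mul_comm' z x, mul_comm' z y]
  nsmul := nsmulRec

/-- Membership in the ghost part `𝕌̄ = 𝕌 ∪ {-∞}` of `𝕋`. -/
def isGhost : T → Prop
  | none => True
  | some (_, s) => s = true

/-- Membership in the tangible part `ℝ ∪ {-∞}` of `𝕋`. -/
def isTangible : T → Prop
  | none => True
  | some (_, s) => s = false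

/-- The underlying real value (junk value `0` at `-∞`); this is `π` on elements `≠ -∞`. -/
def val : T → ℝ
  | none => 0
  | some (a, _) => a

/-- The ghost map `ν`. -/
def nu : T → T
  | none => none
  | some (a, _) => some (a, true)

end T

namespace T

/-- The model value in the half line `[0,∞)`: `-∞ ↦ 0`, an element of value `a ↦ exp a`. -/
noncomputable def gval : T → ℝ
  | none => 0
  | some (a, _) => Real.exp a

lemma nu_isGhost : ∀ x : T, isGhost (nu x)
  | none => trivial
  | some (_, _) => rfl

lemma gval_injOn_tang : Set.InjOn gval {x : T | isTangible x} := by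
  rintro (_ | ⟨a, s⟩) hx (_ | ⟨b, t⟩) hy h <;>
    simp only [gval, Set.mem_setOf_eq, isTangible] at hx hy h
  · rfl
  · exact absurd h.symm (Real.exp_pos b).ne'
  · exact absurd h (Real.exp_pos a).ne'
  · rw [Real.exp_eq_exp] at h; subst hx; subst hy; subst h; rfl

lemma gval_injOn_ghost : Set.InjOn gval {x : T | isGhost x} := by
  rintro (_ | ⟨a, s⟩) hx (_ | ⟨b, t⟩) hy h <;>
    simp only [gval, Set.mem_setOf_eq, isGhost] at hx hy h
  · rfl
  · exact absurd h.symm (Real.exp_pos b).ne'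
  · exact absurd h (Real.exp_pos a).ne'
  · rw [Real.exp_eq_exp] at h; subst hx; subst hy; subst h; rfl

lemma gval_image_tang : gval '' {x : T | isTangible x} = Set.Ici 0 := by
  ext y
  constructor
  · rintro ⟨(_ | ⟨a, s⟩), hx, rfl⟩
    · exact Set.self_mem_Ici
    · exact le_of_lt (by simpa [gval] using Real.exp_pos a)
  · intro hy
    rcases eq_or_lt_of_le (Set.mem_Ici.mp hy : (0 : ℝ) ≤ y) with h | h
    · exact ⟨none, trivial, h⟩
    · exact ⟨some (Real.log y, false), rfl, by simp [gval, Real.exp_log h]⟩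

lemma gval_image_ghost : gval '' {x : T | isGhost x} = Set.Ici 0 := by
  ext y
  constructor
  · rintro ⟨(_ | ⟨a, s⟩), hx, rfl⟩
    · exact Set.self_mem_Ici
    · exact le_of_lt (by simpa [gval] using Real.exp_pos a)
  · intro hy
    rcases eq_or_lt_of_le (Set.mem_Ici.mp hy : (0 : ℝ) ≤ y) with h | h
    · exact ⟨none, trivial, h⟩
    · exact ⟨some (Real.log y, true), rfl, by simp [gval, Real.exp_log h]⟩

/-- The closed sets of the topology on `𝕋`: both the tangible and the ghost layers are
closed in the model `[0,∞)` of `𝕌̄`, and the ghost image of the tangible layer is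
contained in the set. -/
def TIsClosed (W : Set T) : Prop :=
  IsClosed (gval '' (W ∩ {x | isTangible x})) ∧
  IsClosed (gval '' (W ∩ {x | isGhost x})) ∧
  nu '' (W ∩ {x | isTangible x}) ⊆ W ∩ {x | isGhost x}

/-- The topology on `𝕋`. -/
noncomputable instance : TopologicalSpace T :=
  TopologicalSpace.ofClosed {W | TIsClosed W}
    (by
      refine ⟨?_, ?_, ?_⟩ <;> simp [TIsClosed])
    (fun A hA => by
      rcases A.eq_empty_or_nonempty with rfl | hne
      · rw [Set.sInter_empty]
        refine ⟨?_, ?_, ?_⟩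
        · rw [Set.univ_inter, gval_image_tang]; exact isClosed_Ici
        · rw [Set.univ_inter, gval_image_ghost]; exact isClosed_Ici
        · rintro y ⟨x, ⟨-, _⟩, rfl⟩
          exact ⟨trivial, nu_isGhost x⟩
      · have : Nonempty A := hne.to_subtype
        have h1 : (⋂₀ A) ∩ {x : T | isTangible x}
            = ⋂ (W : A), ((W : Set T) ∩ {x | isTangible x}) := by
          ext x
          simp only [Set.mem_inter_iff, Set.mem_sInter, Set.mem_iInter, Set.mem_setOf_eq]
          constructor
          · rintro ⟨h, ht⟩ W; exact ⟨h W W.2, ht⟩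
          · intro h
            obtain ⟨W, hW⟩ := hne
            exact ⟨fun V hV => (h ⟨V, hV⟩).1, (h ⟨W, hW⟩).2⟩
        have h2 : (⋂₀ A) ∩ {x : T | isGhost x}
            = ⋂ (W : A), ((W : Set T) ∩ {x | isGhost x}) := by
          ext x
          simp only [Set.mem_inter_iff, Set.mem_sInter, Set.mem_iInter, Set.mem_setOf_eq]
          constructor
          · rintro ⟨h, ht⟩ W; exact ⟨h W W.2, ht⟩
          · intro h
            obtain ⟨W, hW⟩ := hne
            exact ⟨fun V hV => (h ⟨V, hV⟩).1, (h ⟨W, hW⟩).2⟩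
        refine ⟨?_, ?_, ?_⟩
        · rw [h1, Set.InjOn.image_iInter_eq
            (gval_injOn_tang.mono (Set.iUnion_subset fun W => Set.inter_subset_right))]
          exact isClosed_iInter fun W => (hA W.2).1
        · rw [h2, Set.InjOn.image_iInter_eq
            (gval_injOn_ghost.mono (Set.iUnion_subset fun W => Set.inter_subset_right))]
          exact isClosed_iInter fun W => (hA W.2).2.1
        · rintro y ⟨x, ⟨hx, hxt⟩, rfl⟩
          refine ⟨fun W hW => ((hA hW).2.2 ⟨x, ⟨hx W hW, hxt⟩, rfl⟩).1, nu_isGhost x⟩)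
    (fun A hA B hB => by
      have h1 : (A ∪ B) ∩ {x : T | isTangible x}
          = (A ∩ {x | isTangible x}) ∪ (B ∩ {x | isTangible x}) :=
        Set.union_inter_distrib_right A B _
      have h2 : (A ∪ B) ∩ {x : T | isGhost x}
          = (A ∩ {x | isGhost x}) ∪ (B ∩ {x | isGhost x}) :=
        Set.union_inter_distrib_right A B _
      refine ⟨?_, ?_, ?_⟩
      · rw [h1, Set.image_union]; exact hA.1.union hB.1
      · rw [h2, Set.image_union]; exact hA.2.1.union hB.2.1
      · rintro y ⟨x, ⟨hx, hxt⟩, rfl⟩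
        rcases hx with hxA | hxB
        · have h := hA.2.2 ⟨x, ⟨hxA, hxt⟩, rfl⟩
          exact ⟨Or.inl h.1, h.2⟩
        · have h := hB.2.2 ⟨x, ⟨hxB, hxt⟩, rfl⟩
          exact ⟨Or.inr h.1, h.2⟩)

end T

namespace T

/-- `f` dominates `g` if `f ⊕ g` and `f` agree as functions. -/
def Dominates {n : ℕ} (f g : MvPolynomial (Fin n) T) : Prop :=
  ∀ a : Fin n → T, MvPolynomial.eval a f + MvPolynomial.eval a g = MvPolynomial.eval a f

/-- The polynomial obtained from `f` by deleting the monomial with exponent `i`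
(setting its coefficient to `-∞`). -/
noncomputable def removeMono {n : ℕ} (i : Fin n →₀ ℕ) (f : MvPolynomial (Fin n) T) :
    MvPolynomial (Fin n) T :=
  ∑ j ∈ f.support.erase i, MvPolynomial.monomial j (MvPolynomial.coeff j f)

/-- The monomial of `f` with exponent `i` is essential. -/
def Essential {n : ℕ} (f : MvPolynomial (Fin n) T) (i : Fin n →₀ ℕ) : Prop :=
  i ∈ f.support ∧
    ¬ Dominates (removeMono i f) (MvPolynomial.monomial i (MvPolynomial.coeff i f))

open Classical in
/-- The essential part `f^e` of `f`: the sum of the essential monomials of `f`. -/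
noncomputable def essentialPart {n : ℕ} (f : MvPolynomial (Fin n) T) :
    MvPolynomial (Fin n) T :=
  ∑ i ∈ f.support,
    if Essential f i then MvPolynomial.monomial i (MvPolynomial.coeff i f) else 0

end T

namespace T

lemma some_ne_zero' (p : ℝ × Bool) : (some p : T) ≠ (0 : T) := fun h => Option.some_ne_none p h

lemma add_def' (x y : T) : x + y = T.add x y := rfl

lemma one_ne_zero' : (1 : T) ≠ 0 := fun h => Option.some_ne_none _ h

lemma val_one' : val (1 : T) = 0 := rfl

lemma mul_val' {x y : T} (hx : x ≠ 0) (hy : y ≠ 0) :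
    x * y ≠ 0 ∧ val (x * y) = val x + val y := by
  rcases x with _ | ⟨a, s⟩
  · exact absurd rfl hx
  rcases y with _ | ⟨b, t⟩
  · exact absurd rfl hy
  exact ⟨some_ne_zero' _, rfl⟩

lemma pow_val' {x : T} (hx : x ≠ 0) (k : ℕ) :
    x ^ k ≠ 0 ∧ val (x ^ k) = (k : ℝ) * val x := by
  induction k with
  | zero =>
      refine ⟨by rw [pow_zero]; exact one_ne_zero', ?_⟩
      rw [pow_zero, val_one']; simp
  | succ m ih =>
      rw [pow_succ]
      obtain ⟨h1, h2⟩ := mul_val' ih.1 hx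
      exact ⟨h1, by rw [h2, ih.2]; push_cast; ring⟩

lemma prod_val' {ι : Type*} (s : Finset ι) (g : ι → T) (h : ∀ t ∈ s, g t ≠ 0) :
    (∏ t ∈ s, g t) ≠ 0 ∧ val (∏ t ∈ s, g t) = ∑ t ∈ s, val (g t) := by
  classical
  induction s using Finset.cons_induction with
  | empty =>
      exact ⟨by rw [Finset.prod_empty]; exact one_ne_zero',
        by rw [Finset.prod_empty, Finset.sum_empty, val_one']⟩
  | cons k s hk ih =>
      rw [Finset.prod_cons, Finset.sum_cons]
      obtain ⟨h1, h2⟩ := ih fun t ht => h t (Finset.mem_cons_of_mem ht)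
      obtain ⟨h3, h4⟩ := mul_val' (h k (Finset.mem_cons_self _ _)) h1
      exact ⟨h3, by rw [h4, h2]⟩

/-- `x` lies strictly below level `d` (or is `-∞`). -/
def Below (d : ℝ) (x : T) : Prop := x = 0 ∨ (x ≠ 0 ∧ val x < d)

lemma below_zero (d : ℝ) : Below d 0 := Or.inl rfl

lemma below_add {d : ℝ} {x y : T} (hx : Below d x) (hy : Below d y) :
    Below d (x + y) := by
  rcases x with _ | ⟨a, s⟩
  · exact hy
  rcases y with _ | ⟨b, t⟩
  · exact hx
  rcases hx with hx | ⟨-, hx⟩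
  · exact absurd hx (some_ne_zero' _)
  rcases hy with hy | ⟨-, hy⟩
  · exact absurd hy (some_ne_zero' _)
  show Below d (T.add (some (a, s)) (some (b, t)))
  simp only [T.add]
  show Below d ((if a < b then some (b, t) else if b < a then some (a, s) else some (a, true) : Option (ℝ × Bool)) : T)
  split_ifs
  · exact Or.inr ⟨some_ne_zero' _, hy⟩
  · exact Or.inr ⟨some_ne_zero' _, hx⟩
  · exact Or.inr ⟨some_ne_zero' _, hx⟩

lemma below_sum {ι : Type*} (s : Finset ι) (g : ι → T) (d : ℝ)
    (h : ∀ t ∈ s, Below d (g t)) : Below d (∑ t ∈ s, g t) :=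
  Finset.sum_induction g (Below d) (fun _ _ => below_add) (below_zero d) h

lemma add_of_below {x y : T} (h : Below (val y) x) (hy : y ≠ 0) : x + y = y := by
  rcases y with _ | ⟨b, t⟩
  · exact absurd rfl hy
  rcases x with _ | ⟨a, s⟩
  · rfl
  rcases h with h | ⟨-, h⟩
  · exact absurd h (some_ne_zero' _)
  have h' : a < b := h
  show T.add (some (a, s)) (some (b, t)) = some (b, t)
  simp only [T.add]
  exact if_pos h'

lemma ne_of_below {x y : T} (h : Below (val y) x) (hy : y ≠ 0) : x ≠ y := by
  rcases y with _ | ⟨b, t⟩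
  · exact absurd rfl hy
  rcases x with _ | ⟨a, s⟩
  · exact fun hc => Option.some_ne_none _ hc.symm
  rcases h with h | ⟨-, h⟩
  · exact absurd h (some_ne_zero' _)
  intro hc
  rw [hc] at h
  exact lt_irrefl _ h

lemma add_val_right {x y : T} (hy : y ≠ 0) : x + y ≠ 0 ∧ val y ≤ val (x + y) := by
  rcases y with _ | ⟨b, t⟩
  · exact absurd rfl hy
  rcases x with _ | ⟨a, s⟩
  · exact ⟨some_ne_zero' _, le_refl _⟩
  show T.add (some (a, s)) (some (b, t)) ≠ 0 ∧
    val (some (b, t)) ≤ val (T.add (some (a, s)) (some (b, t)))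
  simp only [T.add]
  show ((if a < b then some (b, t) else if b < a then some (a, s) else some (a, true) : Option (ℝ × Bool)) : T) ≠ (0 : T) ∧ val (some (b, t)) ≤ val ((if a < b then some (b, t) else if b < a then some (a, s) else some (a, true) : Option (ℝ × Bool)) : T)
  split_ifs with h1 h2
  · exact ⟨some_ne_zero' _, le_refl _⟩
  · exact ⟨some_ne_zero' _, le_of_lt h2⟩
  · exact ⟨some_ne_zero' _, le_of_not_gt h1⟩

lemma add_val_left {x y : T} (hx : x ≠ 0) : x + y ≠ 0 ∧ val x ≤ val (x + y) := by
  rw [add_comm]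
  exact add_val_right hx

lemma sum_ne_zero_of_mem {ι : Type*} {s : Finset ι} {g : ι → T} {k : ι}
    (hk : k ∈ s) (h : g k ≠ 0) :
    (∑ t ∈ s, g t) ≠ 0 ∧ val (g k) ≤ val (∑ t ∈ s, g t) := by
  classical
  rw [← Finset.add_sum_erase _ _ hk]
  exact add_val_left h

lemma sum_tangible {ι : Type*} {b : ℝ} (s : Finset ι) (g : ι → T) :
    (∑ t ∈ s, g t) = some (b, false) →
    ∃ k ∈ s, g k = some (b, false) ∧ ∀ k' ∈ s, k' ≠ k → Below b (g k') := by
  classical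
  induction s using Finset.cons_induction with
  | empty =>
      intro h
      rw [Finset.sum_empty] at h
      exact absurd h.symm (some_ne_zero' _)
  | cons k s hk ih =>
      intro h
      rw [Finset.sum_cons] at h
      rcases hgk : g k with _ | ⟨a, sa⟩
      · rw [hgk] at h
        have h' : (∑ t ∈ s, g t) = some (b, false) := h
        obtain ⟨k0, hk0, he, hb⟩ := ih h'
        refine ⟨k0, Finset.mem_cons_of_mem hk0, he, ?_⟩
        intro k' hk' hne
        rcases Finset.mem_cons.1 hk' with rfl | hk's
        · rw [hgk]; exact Or.inl rfl
        · exact hb k' hk's hne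
      · rw [hgk] at h
        rcases hs : (∑ t ∈ s, g t) with _ | ⟨c, sc⟩
        · rw [hs] at h
          have h'' : ((a, sa) : ℝ × Bool) = (b, false) := Option.some.inj h
          obtain ⟨rfl, rfl⟩ : a = b ∧ sa = false :=
            ⟨congrArg Prod.fst h'', congrArg Prod.snd h''⟩
          refine ⟨k, Finset.mem_cons_self _ _, hgk, ?_⟩
          intro k' hk' hne
          rcases Finset.mem_cons.1 hk' with rfl | hk's
          · exact absurd rfl hne
          · rcases eq_or_ne (g k') 0 with hz | hz
            · exact Or.inl hz
            · exact absurd hs (sum_ne_zero_of_mem hk's hz).1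
        · rw [hs] at h
          have h' : T.add (some (a, sa)) (some (c, sc)) = some (b, false) := h
          simp only [T.add] at h'
          have h' : @Eq (Option (ℝ × Bool)) (if a < c then some (c, sc) else if c < a then some (a, sa)
              else some (a, true)) (some (b, false)) := h'
          split_ifs at h' with h1 h2
          · have h'' : ((c, sc) : ℝ × Bool) = (b, false) := Option.some.inj h'
            obtain ⟨rfl, rfl⟩ : c = b ∧ sc = false :=
              ⟨congrArg Prod.fst h'', congrArg Prod.snd h''⟩
            obtain ⟨k0, hk0, he, hb⟩ := ih hs
            refine ⟨k0, Finset.mem_cons_of_mem hk0, he, ?_⟩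
            intro k' hk' hne
            rcases Finset.mem_cons.1 hk' with rfl | hk's
            · rw [hgk]; exact Or.inr ⟨some_ne_zero' _, h1⟩
            · exact hb k' hk's hne
          · have h'' : ((a, sa) : ℝ × Bool) = (b, false) := Option.some.inj h'
            obtain ⟨rfl, rfl⟩ : a = b ∧ sa = false :=
              ⟨congrArg Prod.fst h'', congrArg Prod.snd h''⟩
            refine ⟨k, Finset.mem_cons_self _ _, hgk, ?_⟩
            intro k' hk' hne
            rcases Finset.mem_cons.1 hk' with rfl | hk's
            · exact absurd rfl hne
            · rcases eq_or_ne (g k') 0 with hz | hz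
              · exact Or.inl hz
              · refine Or.inr ⟨hz, ?_⟩
                have hle := (sum_ne_zero_of_mem hk's hz).2
                rw [hs] at hle
                exact lt_of_le_of_lt hle h2
          · have h'' : ((a, true) : ℝ × Bool) = (b, false) := Option.some.inj h'
            exact Bool.noConfusion (congrArg Prod.snd h'')

end T

/-- The value of the monomial of `f` with exponent `j` at the point `a`. -/
noncomputable def Tterm {n : ℕ} (f : MvPolynomial (Fin n) T) (a : Fin n → T)
    (j : Fin n →₀ ℕ) : T :=
  MvPolynomial.coeff j f * ∏ t, a t ^ j t

/-- The affine functional `⟨j, w⟩ + π(α_j)`. -/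
noncomputable def Lfun {n : ℕ} (f : MvPolynomial (Fin n) T) (j : Fin n →₀ ℕ)
    (w : Fin n → ℝ) : ℝ :=
  T.val (MvPolynomial.coeff j f) + ∑ t, (j t : ℝ) * w t

lemma Tterm_live {n : ℕ} (f : MvPolynomial (Fin n) T) (a : Fin n → T)
    (j : Fin n →₀ ℕ) (h : Tterm f a j ≠ 0) : ∀ t, a t = 0 → j t = 0 := by
  intro t ht
  by_contra h'
  apply h
  rw [Tterm, Finset.prod_eq_zero (Finset.mem_univ t) (by rw [ht]; exact zero_pow h'),
    mul_zero]

lemma Tterm_val {n : ℕ} (f : MvPolynomial (Fin n) T) (a : Fin n → T)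
    (j : Fin n →₀ ℕ) (hα : MvPolynomial.coeff j f ≠ 0)
    (h0 : ∀ t, a t = 0 → j t = 0) (w : Fin n → ℝ)
    (hw : ∀ t, a t ≠ 0 → w t = T.val (a t)) :
    Tterm f a j ≠ 0 ∧ T.val (Tterm f a j) = Lfun f j w := by
  have hfac : ∀ t, a t ^ j t ≠ 0 ∧ T.val (a t ^ j t) = (j t : ℝ) * w t := by
    intro t
    by_cases h : a t = 0
    · rw [h0 t h]
      refine ⟨by rw [pow_zero]; exact T.one_ne_zero', ?_⟩
      rw [pow_zero, T.val_one']
      simp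
    · obtain ⟨h1, h2⟩ := T.pow_val' h (j t)
      exact ⟨h1, by rw [h2, hw t h]⟩
  obtain ⟨hp1, hp2⟩ := T.prod_val' Finset.univ (fun t => a t ^ j t) fun t _ => (hfac t).1
  obtain ⟨hm1, hm2⟩ := T.mul_val' hα hp1
  refine ⟨hm1, ?_⟩
  rw [Tterm] at *
  rw [hm2, hp2, Lfun]
  congr 1
  exact Finset.sum_congr rfl fun t _ => (hfac t).2

lemma Tterm_dead {n : ℕ} (f : MvPolynomial (Fin n) T) (a : Fin n → T)
    (j : Fin n →₀ ℕ) (hα : MvPolynomial.coeff j f ≠ 0) (h : Tterm f a j = 0) :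
    ∃ t, a t = 0 ∧ j t ≠ 0 := by
  classical
  by_contra hc
  push_neg at hc
  exact (Tterm_val f a j hα hc (fun t => if a t = 0 then 0 else T.val (a t))
    fun t ht => if_neg ht).1 h

/-- a monomial of `f` (with exponent `i` in the support) is essential
iff the point `(i, π(α_i))` is a vertex of the upper convex hull of the points
`(j, π(α_j))`, `j ∈ Supp f`, i.e. iff some affine functional `c ⋅ x + d` touches the
configuration exactly at `i` from below. -/
theorem tropical_essential_iff_vertex (n : ℕ) (f : MvPolynomial (Fin n) T)
    (i : Fin n →₀ ℕ) (hi : i ∈ f.support) :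
    T.Essential f i ↔
      ∃ (c : Fin n → ℝ) (d : ℝ),
        (∑ t, c t * (i t : ℝ)) + d = T.val (MvPolynomial.coeff i f) ∧
        ∀ j ∈ f.support, j ≠ i →
          (∑ t, c t * (j t : ℝ)) + d > T.val (MvPolynomial.coeff j f) := by
  classical
  have heval : ∀ (a : Fin n → T) (j : Fin n →₀ ℕ) (α : T),
      MvPolynomial.eval a (MvPolynomial.monomial j α) = α * ∏ t, a t ^ j t := by
    intro a j α
    rw [MvPolynomial.eval_monomial, Finsupp.prod_pow]
  have heval_rm : ∀ a : Fin n → T, MvPolynomial.eval a (T.removeMono i f)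
      = ∑ j ∈ f.support.erase i, Tterm f a j := by
    intro a
    rw [T.removeMono, map_sum]
    exact Finset.sum_congr rfl fun j _ => heval a j _
  have heval_mono : ∀ a : Fin n → T,
      MvPolynomial.eval a (MvPolynomial.monomial i (MvPolynomial.coeff i f))
        = Tterm f a i := fun a => heval a i _
  have hαi : MvPolynomial.coeff i f ≠ 0 := MvPolynomial.mem_support_iff.1 hi
  constructor
  · rintro ⟨-, hnd⟩
    obtain ⟨a, ha⟩ := not_forall.1 hnd
    rw [heval_rm, heval_mono] at ha
    have hti : Tterm f a i ≠ 0 := by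
      intro h
      exact ha (by rw [h, add_zero])
    rcases hgi : Tterm f a i with _ | ⟨bm, sm⟩
    · exact absurd hgi hti
    have hvi : T.val (Tterm f a i) = bm := by rw [hgi]; rfl
    -- dichotomy: either everything else is strictly below `bm`, or there is a
    -- single tangible tie `j₀`.
    have key : (∀ j ∈ f.support.erase i, T.Below bm (Tterm f a j)) ∨
        (∃ j₀ ∈ f.support.erase i, Tterm f a j₀ ≠ 0 ∧ T.val (Tterm f a j₀) = bm ∧
          ∀ j ∈ f.support.erase i, j ≠ j₀ → T.Below bm (Tterm f a j)) := by
      rcases hG : (∑ j ∈ f.support.erase i, Tterm f a j) with _ | ⟨bG, sG⟩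
      · left
        intro j hj
        rcases eq_or_ne (Tterm f a j) 0 with hz | hz
        · exact Or.inl hz
        · exact absurd hG (T.sum_ne_zero_of_mem hj hz).1
      · rcases lt_trichotomy bG bm with hlt | heq | hgt
        · left
          intro j hj
          rcases eq_or_ne (Tterm f a j) 0 with hz | hz
          · exact Or.inl hz
          · refine Or.inr ⟨hz, ?_⟩
            have hle := (T.sum_ne_zero_of_mem hj hz).2
            rw [hG] at hle
            exact lt_of_le_of_lt hle hlt
        · subst heq
          have hGfalse : (∑ j ∈ f.support.erase i, Tterm f a j) = some (bG, false) := by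
            cases sG with
            | false => exact hG
            | true =>
                exfalso
                apply ha
                rw [hG, hgi]
                show T.add (some (bG, true)) (some (bG, sm)) = some (bG, true)
                simp only [T.add]
                show @Eq (Option (ℝ × Bool)) (if bG < bG then some (bG, sm) else if bG < bG then some (bG, true)
                  else some (bG, true)) (some (bG, true))
                rw [if_neg (lt_irrefl _), if_neg (lt_irrefl _)]
          obtain ⟨j₀, hj₀, hje, hb⟩ := T.sum_tangible _ _ hGfalse
          right
          exact ⟨j₀, hj₀, by rw [hje]; exact T.some_ne_zero' _, by rw [hje]; rfl, hb⟩
        · exfalso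
          apply ha
          rw [hG, hgi]
          show T.add (some (bG, sG)) (some (bm, sm)) = some (bG, sG)
          simp only [T.add]
          show @Eq (Option (ℝ × Bool)) (if bG < bm then some (bm, sm) else if bm < bG then some (bG, sG)
            else some (bG, true)) (some (bG, sG))
          rw [if_neg (by linarith : ¬ bG < bm), if_pos hgt]
    -- real weights, with very negative value `M` at the `-∞` coordinates
    set w0 : ℝ → Fin n → ℝ := fun M t => if a t = 0 then M else T.val (a t) with hw0
    have hlive : ∀ j, MvPolynomial.coeff j f ≠ 0 → Tterm f a j ≠ 0 → ∀ M : ℝ,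
        T.val (Tterm f a j) = Lfun f j (w0 M) := by
      intro j hαj hj M
      exact (Tterm_val f a j hαj (Tterm_live f a j hj) (w0 M) fun t ht => if_neg ht).2
    have hLiM : ∀ M : ℝ, Lfun f i (w0 M) = bm := fun M => by
      rw [← hlive i hαi hti M, hvi]
    have hMev : ∀ᶠ M in Filter.atBot, ∀ j ∈ f.support.erase i,
        Tterm f a j = 0 → Lfun f j (w0 M) < bm := by
      rw [Filter.eventually_all_finset]
      intro j hj
      by_cases hz : Tterm f a j = 0
      swap
      · exact Filter.Eventually.of_forall fun M h => absurd h hz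
      have hαj : MvPolynomial.coeff j f ≠ 0 :=
        MvPolynomial.mem_support_iff.1 (Finset.mem_of_mem_erase hj)
      obtain ⟨t0, ht0, hjt0⟩ := Tterm_dead f a j hαj hz
      have hdecomp : ∀ M : ℝ, Lfun f j (w0 M)
          = (T.val (MvPolynomial.coeff j f)
              + ∑ t, (j t : ℝ) * (if a t = 0 then 0 else T.val (a t)))
            + M * ∑ t, ((j t : ℝ) * (if a t = 0 then 1 else 0)) := by
        intro M
        have hterm : ∀ t : Fin n, (j t : ℝ) * (w0 M t)
            = (j t : ℝ) * (if a t = 0 then 0 else T.val (a t))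
              + M * ((j t : ℝ) * (if a t = 0 then 1 else 0)) := by
          intro t
          by_cases h : a t = 0 <;> simp only [hw0, h, if_pos, if_neg, ite_true,
            ite_false, if_true, if_false] <;> simp [h] <;> ring
        simp only [Lfun]
        rw [Finset.sum_congr rfl fun t _ => hterm t, Finset.sum_add_distrib,
          ← Finset.mul_sum]
        ring
      have hD : (0:ℝ) < ∑ t, ((j t : ℝ) * (if a t = 0 then 1 else 0)) := by
        have h1 : (1:ℝ) ≤ (j t0 : ℝ) * (if a t0 = 0 then 1 else 0) := by
          rw [if_pos ht0, mul_one]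
          exact_mod_cast Nat.one_le_iff_ne_zero.2 hjt0
        have h2 : ∀ t ∈ (Finset.univ : Finset (Fin n)),
            (0:ℝ) ≤ (j t : ℝ) * (if a t = 0 then 1 else 0) := by
          intro t _
          by_cases h : a t = 0 <;> simp [h] <;> positivity
        calc (0:ℝ) < 1 := one_pos
          _ ≤ (j t0 : ℝ) * (if a t0 = 0 then 1 else 0) := h1
          _ ≤ _ := Finset.single_le_sum h2 (Finset.mem_univ t0)
      have htend : Filter.Tendsto (fun M : ℝ => Lfun f j (w0 M))
          Filter.atBot Filter.atBot := by
        simp only [hdecomp]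
        exact Filter.tendsto_atBot_add_const_left _ _
          (Filter.tendsto_id.atBot_mul_const hD)
      exact (htend.eventually (Filter.eventually_lt_atBot bm)).mono fun M h _ => h
    obtain ⟨M, hM⟩ := hMev.exists
    have hEx : ∃ W : Fin n → ℝ, ∀ j ∈ f.support.erase i, Lfun f j W < Lfun f i W := by
      rcases key with H1 | ⟨j₀, hj₀, hj₀ne, hj₀val, hoth⟩
      · refine ⟨w0 M, fun j hj => ?_⟩
        rw [hLiM M]
        rcases H1 j hj with hz | ⟨hz, hv⟩
        · exact hM j hj hz
        · have hαj := MvPolynomial.mem_support_iff.1 (Finset.mem_of_mem_erase hj)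
          rw [← hlive j hαj hz M]
          exact hv
      · have hαj₀ := MvPolynomial.mem_support_iff.1 (Finset.mem_of_mem_erase hj₀)
        have hLj₀ : Lfun f j₀ (w0 M) = bm := by
          rw [← hlive j₀ hαj₀ hj₀ne M, hj₀val]
        have hij₀ : i ≠ j₀ := fun h => (Finset.ne_of_mem_erase hj₀) h.symm
        obtain ⟨t0, ht0⟩ := Finsupp.ne_iff.1 hij₀
        set σ : ℝ := if j₀ t0 < i t0 then 1 else -1 with hσdef
        have hσ : 0 < σ * ((i t0 : ℝ) - (j₀ t0 : ℝ)) := by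
          rcases Nat.lt_or_ge (j₀ t0) (i t0) with h | h
          · have hc : (j₀ t0 : ℝ) < (i t0 : ℝ) := by exact_mod_cast h
            rw [hσdef, if_pos h]
            linarith
          · have h' : i t0 < j₀ t0 := h.lt_of_ne ht0
            have hc : (i t0 : ℝ) < (j₀ t0 : ℝ) := by exact_mod_cast h'
            rw [hσdef, if_neg (not_lt.2 h)]
            linarith
        set w' : ℝ → Fin n → ℝ := fun ε t => w0 M t + (if t = t0 then ε * σ else 0)
          with hw'
        have hL' : ∀ (jj : Fin n →₀ ℕ) (ε : ℝ),
            Lfun f jj (w' ε) = Lfun f jj (w0 M) + ε * σ * (jj t0 : ℝ) := by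
          intro jj ε
          simp only [Lfun, hw']
          rw [Finset.sum_congr rfl fun t _ => mul_add ((jj t : ℝ)) _ _,
            Finset.sum_add_distrib]
          have hsum : ∑ t, (jj t : ℝ) * (if t = t0 then ε * σ else 0)
              = (jj t0 : ℝ) * (ε * σ) := by
            simp [mul_ite, Finset.sum_ite_eq']
          rw [hsum]
          ring
        have hev : ∀ᶠ ε in nhdsWithin (0:ℝ) (Set.Ioi 0), ∀ j ∈ f.support.erase i,
            Lfun f j (w' ε) < Lfun f i (w' ε) := by
          rw [Filter.eventually_all_finset]
          intro j hj
          by_cases hjj : j = j₀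
          · subst hjj
            filter_upwards [self_mem_nhdsWithin] with ε hε
            have hε' : (0:ℝ) < ε := hε
            rw [hL', hL', hLj₀, hLiM M]
            nlinarith [mul_pos hε' hσ]
          · have hlt : Lfun f j (w0 M) < bm := by
              rcases hoth j hj hjj with hz | ⟨hz, hv⟩
              · exact hM j hj hz
              · have hαj := MvPolynomial.mem_support_iff.1 (Finset.mem_of_mem_erase hj)
                rw [← hlive j hαj hz M]
                exact hv
            have hcont : Filter.Tendsto
                (fun ε : ℝ => Lfun f i (w' ε) - Lfun f j (w' ε)) (nhds 0)
                (nhds (Lfun f i (w0 M) - Lfun f j (w0 M))) := by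
              simp only [hL']
              have hc : Continuous fun ε : ℝ =>
                  (Lfun f i (w0 M) + ε * σ * (i t0 : ℝ))
                    - (Lfun f j (w0 M) + ε * σ * (j t0 : ℝ)) := by
                fun_prop
              simpa using hc.tendsto 0
            have hpos : 0 < Lfun f i (w0 M) - Lfun f j (w0 M) := by
              rw [hLiM M]; linarith
            have hevn := hcont.eventually (eventually_gt_nhds hpos)
            refine (hevn.filter_mono nhdsWithin_le_nhds).mono ?_
            intro ε hε
            linarith
        obtain ⟨ε, hε⟩ := hev.exists
        exact ⟨w' ε, hε⟩
    obtain ⟨W, hW⟩ := hEx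
    refine ⟨fun t => -(W t), T.val (MvPolynomial.coeff i f) + ∑ t, (i t : ℝ) * W t,
      ?_, ?_⟩
    · have h1 : ∑ t, -(W t) * (i t : ℝ) = -∑ t, (i t : ℝ) * W t := by
        rw [← Finset.sum_neg_distrib]
        exact Finset.sum_congr rfl fun t _ => by ring
      rw [h1]
      ring
    · intro j hjS hjne
      have hj : j ∈ f.support.erase i := Finset.mem_erase.2 ⟨hjne, hjS⟩
      have hh := hW j hj
      simp only [Lfun] at hh
      have h1 : ∑ t, -(W t) * (j t : ℝ) = -∑ t, (j t : ℝ) * W t := by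
        rw [← Finset.sum_neg_distrib]
        exact Finset.sum_congr rfl fun t _ => by ring
      rw [gt_iff_lt, h1]
      linarith
  · rintro ⟨c, d, hceq, hclt⟩
    refine ⟨hi, ?_⟩
    intro hdom
    set a : Fin n → T := fun t => T.tang (-(c t)) with ha
    have haz : ∀ t, a t ≠ 0 := by
      intro t h
      rw [ha] at h
      exact Option.some_ne_none _ h
    have hterm : ∀ j, MvPolynomial.coeff j f ≠ 0 →
        Tterm f a j ≠ 0 ∧ T.val (Tterm f a j)
          = T.val (MvPolynomial.coeff j f) - ∑ t, c t * (j t : ℝ) := by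
      intro j hαj
      obtain ⟨h1, h2⟩ := Tterm_val f a j hαj (fun t ht => absurd ht (haz t))
        (fun t => -(c t)) (fun t _ => by rw [ha]; rfl)
      refine ⟨h1, ?_⟩
      rw [h2]
      simp only [Lfun]
      have h3 : ∑ t, (j t : ℝ) * (-(c t)) = -∑ t, c t * (j t : ℝ) := by
        rw [← Finset.sum_neg_distrib]
        exact Finset.sum_congr rfl fun t _ => by ring
      rw [h3]
      ring
    have hG : T.Below d (∑ j ∈ f.support.erase i, Tterm f a j) := by
      refine T.below_sum _ _ _ ?_
      intro j hj
      have hjS := Finset.mem_of_mem_erase hj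
      have hjne := Finset.ne_of_mem_erase hj
      have hαj := MvPolynomial.mem_support_iff.1 hjS
      obtain ⟨h1, h2⟩ := hterm j hαj
      refine Or.inr ⟨h1, ?_⟩
      rw [h2]
      have := hclt j hjS hjne
      linarith
    obtain ⟨hmne, hmval⟩ := hterm i hαi
    have hvm : T.val (Tterm f a i) = d := by rw [hmval]; linarith
    have hdom' := hdom a
    rw [heval_rm, heval_mono] at hdom'
    have hadd : (∑ j ∈ f.support.erase i, Tterm f a j) + Tterm f a i = Tterm f a i :=
      T.add_of_below (by rw [hvm]; exact hG) hmne
    exact T.ne_of_below (by rw [hvm]; exact hG) hmne (hadd.symm.trans hdom').symm
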